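/- (Correctness of decryption in the pairing component.) In bilinear groups of prime order q with pairing ê: G × H → G_T, generators g ∈ G, h ∈ H, let s_μ ∈ Z_q for μ ∈ I be shares and γ_μ ∈ Z_q constants with Σ_{μ∈I} γ_μ s_μ = α. Let w, u, v ∈ G, t_μ, r_μ, s ∈ Z_q, and attribute labels A_μ ∈ Z_q. Define sk_{(μ,1)} = g^{s_μ} w^{t_μ}, sk_{(μ,2)} = (u^{A_μ} v)^{-t_μ}, sk_{(μ,3)} = h^{t_μ}, ct_{(0,1)} = h^s, ct_{(μ,1)} = h^{r_μ}, ct_{(μ,2)} = (u^{A_μ} v)^{r_μ} w^{-s}. Then Π_{μ∈I} (ê(sk_{(μ,1)}, ct_{(0,1)}) · ê(sk_{(μ,2)}, ct_{(μ,1)}) · ê(ct_{(μ,2)}, sk_{(μ,3)}))^{γ_μ} = ê(g, h)^{αs}. -/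

import Mathlib

/-- Exponentiation of a group element by an element of `ZMod q`. -/
def gp {G : Type*} [Monoid G] {q : ℕ} (g : G) (x : ZMod q) : G := g ^ x.val

section Aux

variable {q : ℕ} [NeZero q]

lemma pow_mod_eq {G : Type*} [Monoid G] (hG : ∀ x : G, x ^ q = 1) (x : G) (n : ℕ) :
    x ^ (n % q) = x ^ n := by
  conv_rhs => rw [← Nat.div_add_mod n q]
  rw [pow_add, pow_mul, hG, one_pow, one_mul]

lemma gp_add {G : Type*} [Monoid G] (hG : ∀ x : G, x ^ q = 1) (x : G) (a b : ZMod q) :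
    gp x (a + b) = gp x a * gp x b := by
  unfold gp
  rw [ZMod.val_add, pow_mod_eq hG, pow_add]

lemma gp_zero {G : Type*} [Monoid G] (x : G) : gp x (0 : ZMod q) = 1 := by
  simp [gp]

lemma gp_gp {G : Type*} [Monoid G] (hG : ∀ x : G, x ^ q = 1) (x : G) (a b : ZMod q) :
    gp (gp x a) b = gp x (a * b) := by
  unfold gp
  rw [← pow_mul, ZMod.val_mul, pow_mod_eq hG]

lemma e_one_left {G H GT : Type*} [Monoid G] [Monoid H] [CommGroup GT]
    (e : G → H → GT) (hl : ∀ x x' y, e (x * x') y = e x y * e x' y) (y : H) :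
    e 1 y = 1 := by
  have := hl 1 1 y
  rw [one_mul] at this
  exact (left_eq_mul.mp this)

lemma e_one_right {G H GT : Type*} [Monoid G] [Monoid H] [CommGroup GT]
    (e : G → H → GT) (hr : ∀ x y y', e x (y * y') = e x y * e x y') (x : G) :
    e x 1 = 1 := by
  have := hr x 1 1
  rw [one_mul] at this
  exact (left_eq_mul.mp this)

lemma e_pow_left {G H GT : Type*} [Monoid G] [Monoid H] [CommGroup GT]
    (e : G → H → GT) (hl : ∀ x x' y, e (x * x') y = e x y * e x' y)
    (x : G) (y : H) (m : ℕ) : e (x ^ m) y = (e x y) ^ m := by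
  induction m with
  | zero => simpa using e_one_left e hl y
  | succ k ih => rw [pow_succ, hl, ih, pow_succ]

lemma e_pow_right {G H GT : Type*} [Monoid G] [Monoid H] [CommGroup GT]
    (e : G → H → GT) (hr : ∀ x y y', e x (y * y') = e x y * e x y')
    (x : G) (y : H) (m : ℕ) : e x (y ^ m) = (e x y) ^ m := by
  induction m with
  | zero => simpa using e_one_right e hr x
  | succ k ih => rw [pow_succ, hr, ih, pow_succ]

lemma e_gp {G H GT : Type*} [Monoid G] [Monoid H] [CommGroup GT]
    (hGT : ∀ x : GT, x ^ q = 1)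
    (e : G → H → GT) (hl : ∀ x x' y, e (x * x') y = e x y * e x' y)
    (hr : ∀ x y y', e x (y * y') = e x y * e x y')
    (x : G) (y : H) (a b : ZMod q) :
    e (gp x a) (gp y b) = gp (e x y) (a * b) := by
  unfold gp
  rw [e_pow_left e hl, e_pow_right e hr, ← pow_mul, ZMod.val_mul, pow_mod_eq hGT,
      Nat.mul_comm]

lemma gp_sum {G : Type*} [CommMonoid G] (hG : ∀ x : G, x ^ q = 1) (x : G)
    {ι : Type*} (I : Finset ι) (f : ι → ZMod q) :
    ∏ μ ∈ I, gp x (f μ) = gp x (∑ μ ∈ I, f μ) := by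
  classical
  induction I using Finset.induction_on with
  | empty => simp [gp_zero]
  | insert _ _ hμ ih =>
      rw [Finset.prod_insert hμ, Finset.sum_insert hμ, gp_add hG, ih]

end Aux

/-- Correctness of decryption in the pairing component:
`Π_{μ∈I} (ê(sk_{(μ,1)}, ct_{(0,1)}) · ê(sk_{(μ,2)}, ct_{(μ,1)}) ·
ê(ct_{(μ,2)}, sk_{(μ,3)}))^{γ_μ} = ê(g,h)^{αs}` when `Σ γ_μ s_μ = α`. -/
theorem stmt9 {q : ℕ} [Fact q.Prime]
    {G H GT : Type*} [CommGroup G] [CommGroup H] [CommGroup GT]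
    (hG : ∀ x : G, x ^ q = 1) (hH : ∀ x : H, x ^ q = 1) (hGT : ∀ x : GT, x ^ q = 1)
    (g : G) (h : H) (e : G → H → GT)
    (hl : ∀ x x' y, e (x * x') y = e x y * e x' y)
    (hr : ∀ x y y', e x (y * y') = e x y * e x y')
    (hbil : ∀ a b : ZMod q, e (gp g a) (gp h b) = gp (e g h) (a * b))
    (n : ℕ) (I : Finset (Fin n))
    (sμ γ t' r' A : Fin n → ZMod q) (α s : ZMod q)
    (w u v : G)
    (hα : ∑ μ ∈ I, γ μ * sμ μ = α) :
    ∏ μ ∈ I,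
      gp (e (gp g (sμ μ) * gp w (t' μ)) (gp h s)
          * e (gp (gp u (A μ) * v) (-(t' μ))) (gp h (r' μ))
          * e (gp (gp u (A μ) * v) (r' μ) * gp w (-s)) (gp h (t' μ)))
        (γ μ)
      = gp (e g h) (α * s) := by
  have hq : NeZero q := ⟨(Fact.out : q.Prime).ne_zero⟩
  have key : ∀ μ ∈ I,
      gp (e (gp g (sμ μ) * gp w (t' μ)) (gp h s)
          * e (gp (gp u (A μ) * v) (-(t' μ))) (gp h (r' μ))
          * e (gp (gp u (A μ) * v) (r' μ) * gp w (-s)) (gp h (t' μ)))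
        (γ μ) = gp (e g h) (γ μ * sμ μ * s) := by
    intro μ _
    set X := gp u (A μ) * v with hX
    rw [hl, hl, e_gp hGT e hl hr, e_gp hGT e hl hr, e_gp hGT e hl hr,
        e_gp hGT e hl hr, e_gp hGT e hl hr]
    have : gp (e g h) (sμ μ * s) * gp (e w h) (t' μ * s) *
        gp (e X h) (-t' μ * r' μ) *
        (gp (e X h) (r' μ * t' μ) * gp (e w h) (-s * t' μ)) =
        gp (e g h) (sμ μ * s) := by
      have hBE : gp (e w h) (t' μ * s) * gp (e w h) (-s * t' μ) = 1 := by
        rw [← gp_add hGT, show t' μ * s + -s * t' μ = 0 from by ring, gp_zero]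
      have hCD : gp (e X h) (-t' μ * r' μ) * gp (e X h) (r' μ * t' μ) = 1 := by
        rw [← gp_add hGT, show -t' μ * r' μ + r' μ * t' μ = 0 from by ring, gp_zero]
      calc gp (e g h) (sμ μ * s) * gp (e w h) (t' μ * s) *
            gp (e X h) (-t' μ * r' μ) *
            (gp (e X h) (r' μ * t' μ) * gp (e w h) (-s * t' μ)) =
          gp (e g h) (sμ μ * s) * (gp (e w h) (t' μ * s) * gp (e w h) (-s * t' μ)) *
            (gp (e X h) (-t' μ * r' μ) * gp (e X h) (r' μ * t' μ)) := by ac_rfl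
        _ = gp (e g h) (sμ μ * s) := by rw [hBE, hCD, mul_one, mul_one]
    rw [this, gp_gp hGT]
    ring_nf
  rw [Finset.prod_congr rfl key, gp_sum hGT]
  congr 1
  rw [← Finset.sum_mul, hα]
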